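/- For every δ ∈ (0, 1) there exist a threshold κ̃(δ) ≥ 1 and constants c₂, c₃ > 0 (independent of δ and κ) and c₁ = c₁(δ) > 0 such that for every κ ≥ κ̃(δ), every a ∈ [0, 1 − δ], and every solution (u, λ) of the ergodic equation E(κ, a), one has c₁ κ^{1/2} x² − c₃ ≤ u(x) ≤ c₂ κ^{1/2} x² + c₃ for all x ∈ [−π, π]. -/

import Mathlib

open Real

/-- `V x = 1 - cos x`. -/
noncomputable def Vfun (x : ℝ) : ℝ := 1 - Real.cos x

/-- The pair `(u, lam)` solves the ergodic equation `E(κ, a)`: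
`u` is `C²` and even, `u 0 = 0`, `u'(±π) = 0`, and
`-u'' + (1/2)|u'|² + lam = κ V(x)(1 - a)` on `[-π, π]`. -/
def SolvesE (κ a : ℝ) (u : ℝ → ℝ) (lam : ℝ) : Prop :=
  ContDiff ℝ 2 u ∧ (∀ x : ℝ, u (-x) = u x) ∧ u 0 = 0 ∧
  deriv u π = 0 ∧ deriv u (-π) = 0 ∧
  ∀ x ∈ Set.Icc (-π) π,
    -(deriv (deriv u) x) + (1 / 2) * (deriv u x) ^ 2 + lam = κ * Vfun x * (1 - a)

/-- The density associated to `u`. -/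
noncomputable def dens (u : ℝ → ℝ) (x : ℝ) : ℝ :=
  Real.exp (-u x) / ∫ y in (-π)..π, Real.exp (-u y)

/-- The pair `(v, lam')` solves the linearized equation `L(κ, a)` along `(u, lam)`:
`v` is `C²`, `v 0 = 0`, `v'(±π) = 0`, and `-v'' + u' v' + lam' = -κ V(x)` on `[-π, π]`. -/
def SolvesL (κ : ℝ) (u v : ℝ → ℝ) (lam' : ℝ) : Prop :=
  ContDiff ℝ 2 v ∧ v 0 = 0 ∧ deriv v π = 0 ∧ deriv v (-π) = 0 ∧
  ∀ x ∈ Set.Icc (-π) π,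
    -(deriv (deriv v) x) + deriv u x * deriv v x + lam' = -(κ * Vfun x)

section AuxProofs
open Set

section Helpers

lemma wronskian_deriv {A A' A'' B B' B'' : ℝ → ℝ} {x : ℝ}
    (hA : HasDerivAt A (A' x) x) (hA' : HasDerivAt A' (A'' x) x)
    (hB : HasDerivAt B (B' x) x) (hB' : HasDerivAt B' (B'' x) x) :
    HasDerivAt (fun y => A' y * B y - A y * B' y) (A'' x * B x - A x * B'' x) x := by
  have h := (hA'.mul hB).sub (hA.mul hB')
  refine h.congr_deriv ?_; ring

lemma mono_help {W F : ℝ → ℝ} {a b : ℝ}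
    (hW : ∀ x ∈ Icc a b, HasDerivAt W (F x) x) (hF : ∀ x ∈ Ioo a b, 0 ≤ F x) :
    MonotoneOn W (Icc a b) := by
  apply monotoneOn_of_deriv_nonneg (convex_Icc a b)
  · intro x hx; exact (hW x hx).continuousAt.continuousWithinAt
  · intro x hx; rw [interior_Icc] at hx
    exact ((hW x (Ioo_subset_Icc_self hx)).differentiableAt).differentiableWithinAt
  · intro x hx; rw [interior_Icc] at hx
    rw [(hW x (Ioo_subset_Icc_self hx)).deriv]; exact hF x hx

lemma anti_help {W F : ℝ → ℝ} {a b : ℝ}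
    (hW : ∀ x ∈ Icc a b, HasDerivAt W (F x) x) (hF : ∀ x ∈ Ioo a b, F x ≤ 0) :
    AntitoneOn W (Icc a b) := by
  apply antitoneOn_of_deriv_nonpos (convex_Icc a b)
  · intro x hx; exact (hW x hx).continuousAt.continuousWithinAt
  · intro x hx; rw [interior_Icc] at hx
    exact ((hW x (Ioo_subset_Icc_self hx)).differentiableAt).differentiableWithinAt
  · intro x hx; rw [interior_Icc] at hx
    rw [(hW x (Ioo_subset_Icc_self hx)).deriv]; exact hF x hx

lemma gauss_d1 (b x : ℝ) : HasDerivAt (fun y : ℝ => Real.exp (-(b*y^2)))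
    (-(2*b*x) * Real.exp (-(b*x^2))) x := by
  have h : HasDerivAt (fun y : ℝ => -(b*y^2)) (-(2*b*x)) x := by
    have := ((hasDerivAt_pow 2 x).const_mul b).neg
    refine this.congr_deriv ?_; ring
  have := h.exp
  refine this.congr_deriv ?_; ring

lemma gauss_d2 (b x : ℝ) : HasDerivAt (fun y : ℝ => -(2*b*y) * Real.exp (-(b*y^2)))
    ((4*b^2*x^2 - 2*b) * Real.exp (-(b*x^2))) x := by
  have hl : HasDerivAt (fun y : ℝ => -(2*b*y)) (-(2*b)) x := by
    have := (hasDerivAt_id x).const_mul (-(2*b))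
    simpa using this
  have := hl.mul (gauss_d1 b x)
  refine this.congr_deriv ?_; ring

lemma exp_sq_d1 (b x : ℝ) : HasDerivAt (fun y : ℝ => Real.exp (b*y^2))
    (2*b*x * Real.exp (b*x^2)) x := by
  have h : HasDerivAt (fun y : ℝ => b*y^2) (2*b*x) x := by
    have := (hasDerivAt_pow 2 x).const_mul b
    refine this.congr_deriv ?_; ring
  have := h.exp
  refine this.congr_deriv ?_; ring

lemma cos_d1 (c x : ℝ) : HasDerivAt (fun y : ℝ => Real.cos (c*y)) (-(c * Real.sin (c*x))) x := by
  have hl : HasDerivAt (fun y : ℝ => c*y) c x := by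
    simpa using (hasDerivAt_id x).const_mul c
  have := (Real.hasDerivAt_cos (c*x)).comp x hl
  refine this.congr_deriv ?_; ring

lemma cos_d2 (c x : ℝ) : HasDerivAt (fun y : ℝ => -(c * Real.sin (c*y)))
    (-(c^2 * Real.cos (c*x))) x := by
  have hl : HasDerivAt (fun y : ℝ => c*y) c x := by
    simpa using (hasDerivAt_id x).const_mul c
  have := (((Real.hasDerivAt_sin (c*x)).comp x hl).const_mul c).neg
  refine this.congr_deriv ?_; ring

lemma cosh_d1 (m x : ℝ) : HasDerivAt (fun y : ℝ => Real.cosh (m*(π - y)))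
    (-(m * Real.sinh (m*(π - x)))) x := by
  have hl : HasDerivAt (fun y : ℝ => m*(π - y)) (-m) x := by
    have := ((hasDerivAt_id x).const_sub π).const_mul m
    refine this.congr_deriv ?_; ring
  have := (Real.hasDerivAt_cosh (m*(π - x))).comp x hl
  refine this.congr_deriv ?_; ring

lemma cosh_d2 (m x : ℝ) : HasDerivAt (fun y : ℝ => -(m * Real.sinh (m*(π - y))))
    (m^2 * Real.cosh (m*(π - x))) x := by
  have hl : HasDerivAt (fun y : ℝ => m*(π - y)) (-m) x := by
    have := ((hasDerivAt_id x).const_sub π).const_mul m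
    refine this.congr_deriv ?_; ring
  have := (((Real.hasDerivAt_sinh (m*(π - x))).comp x hl).const_mul m).neg
  refine this.congr_deriv ?_; ring

end Helpers

/-- Context for the Hopf-Cole transformed ergodic ODE on `[0, π]`. -/
structure PhiCtx where
  K : ℝ
  lam : ℝ
  φ : ℝ → ℝ
  D : ℝ → ℝ
  hK : (10000:ℝ) ≤ K
  hφd : ∀ x : ℝ, HasDerivAt φ (D x) x
  hDd : ∀ x ∈ Icc (0:ℝ) π, HasDerivAt D ((K*(1 - Real.cos x) - lam)/2 * φ x) x
  hφpos : ∀ x : ℝ, 0 < φ x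
  hφ0 : φ 0 = 1
  hD0 : D 0 = 0
  hDπ : D π = 0

namespace PhiCtx

variable (c : PhiCtx)

noncomputable def s : ℝ := Real.sqrt c.K

lemma s_sq : c.s ^ 2 = c.K := Real.sq_sqrt (by linarith [c.hK])

lemma s_ge : (100:ℝ) ≤ c.s := by
  have h1 := c.s_sq
  have h2 : 0 ≤ c.s := Real.sqrt_nonneg _
  nlinarith [c.hK]

lemma K_pos : (0:ℝ) < c.K := by linarith [c.hK]

lemma lam_pos : 0 < c.lam := by
  by_contra h
  push_neg at h
  have hmono : MonotoneOn c.D (Icc 0 π) := by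
    apply mono_help c.hDd
    intro x hx
    have hcos : Real.cos x ≤ 1 := Real.cos_le_one x
    have := (c.hφpos x).le
    have hK := c.K_pos
    have h1 : 0 ≤ c.K*(1 - Real.cos x) := mul_nonneg hK.le (by linarith)
    exact mul_nonneg (div_nonneg (by linarith) (by norm_num)) this
  have hD0' : ∀ x ∈ Icc (0:ℝ) π, c.D x = 0 := by
    intro x hx
    have h1 : c.D x ≤ c.D π := hmono hx (by constructor <;> [exact pi_pos.le; rfl]) hx.2
    have h2 : c.D 0 ≤ c.D x := hmono (by constructor <;> [rfl; exact pi_pos.le]) hx hx.1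
    rw [c.hD0] at h2; rw [c.hDπ] at h1; linarith
  -- derivative of D at π/2 must be 0, contradiction
  have hmem : π/2 ∈ Icc (0:ℝ) π := by constructor <;> linarith [pi_pos]
  have hev : c.D =ᶠ[nhds (π/2)] (fun _ => (0:ℝ)) := by
    have hop : Ioo (0:ℝ) π ∈ nhds (π/2) := by
      apply Ioo_mem_nhds <;> linarith [pi_pos]
    filter_upwards [hop] with y hy
    exact hD0' y (Ioo_subset_Icc_self hy)
  have hD2 := c.hDd (π/2) hmem
  have hzero : HasDerivAt c.D 0 (π/2) :=
    (hasDerivAt_const (π/2) (0:ℝ)).congr_of_eventuallyEq hev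
  have := hD2.unique hzero
  rw [Real.cos_pi_div_two] at this
  have hφ := c.hφpos (π/2)
  have hK := c.K_pos
  nlinarith


lemma one_sub_cos_le (x : ℝ) : 1 - Real.cos x ≤ x^2/2 := by
  have := Real.one_sub_sq_div_two_le_cos (x := x)
  linarith

lemma lam_le : c.lam ≤ c.s := by
  by_contra hcon
  push_neg at hcon
  have hs100 := c.s_ge
  have hsq := c.s_sq
  set s := c.s with hs
  have hWd : ∀ x ∈ Icc (0:ℝ) π, HasDerivAt
      (fun y => c.D y * Real.exp (-(s/4*y^2)) - c.φ y * (-(2*(s/4)*y) * Real.exp (-(s/4*y^2))))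
      ((c.K*(1 - Real.cos x) - c.lam)/2 * c.φ x * Real.exp (-(s/4*x^2))
        - c.φ x * ((4*(s/4)^2*x^2 - 2*(s/4)) * Real.exp (-(s/4*x^2)))) x := by
    intro x hx
    have h := ((c.hDd x hx).mul (gauss_d1 (s/4) x)).sub ((c.hφd x).mul (gauss_d2 (s/4) x))
    refine h.congr_deriv ?_
    ring
  have hanti : AntitoneOn
      (fun y => c.D y * Real.exp (-(s/4*y^2)) - c.φ y * (-(2*(s/4)*y) * Real.exp (-(s/4*y^2))))
      (Icc 0 π) := by
    apply anti_help hWd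
    intro x hx
    have hφ := (c.hφpos x).le
    have hψp : (0:ℝ) < Real.exp (-(s/4*x^2)) := Real.exp_pos _
    have hcos := one_sub_cos_le x
    have hkey : (c.K*(1 - Real.cos x) - c.lam)/2 - (4*(s/4)^2*x^2 - 2*(s/4)) ≤ 0 := by
      nlinarith [c.K_pos]
    have heq : (c.K*(1 - Real.cos x) - c.lam)/2 * c.φ x * Real.exp (-(s/4*x^2))
        - c.φ x * ((4*(s/4)^2*x^2 - 2*(s/4)) * Real.exp (-(s/4*x^2)))
        = ((c.K*(1 - Real.cos x) - c.lam)/2 - (4*(s/4)^2*x^2 - 2*(s/4)))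
          * (c.φ x * Real.exp (-(s/4*x^2))) := by ring
    rw [heq]
    exact mul_nonpos_of_nonpos_of_nonneg hkey (mul_nonneg hφ hψp.le)
  have key := hanti (left_mem_Icc.2 pi_pos.le) (right_mem_Icc.2 pi_pos.le) pi_pos.le
  simp only [c.hD0, c.hDπ, c.hφ0] at key
  norm_num at key
  have hφπ := c.hφpos π
  have hψp : (0:ℝ) < Real.exp (-(s/4*π^2)) := Real.exp_pos _
  have : 0 < c.φ π * (2*(s/4)*π * Real.exp (-(s/4*π^2))) := by
    apply mul_pos hφπ
    apply mul_pos (by nlinarith [pi_pos]) hψp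
  nlinarith [key, this]

lemma lam_lt_K : c.lam < c.K := by
  have := c.lam_le
  have := c.s_ge
  have := c.s_sq
  nlinarith

lemma D_nonpos : ∀ x ∈ Icc (0:ℝ) π, c.D x ≤ 0 := by
  have hlam := c.lam_pos
  have hlamK := c.lam_lt_K
  have hK := c.K_pos
  set t : ℝ := 1 - c.lam/c.K with ht
  have ht1 : t < 1 := by
    rw [ht]; have : 0 < c.lam/c.K := div_pos hlam hK; linarith
  have ht0 : 0 < t := by
    rw [ht]
    have : c.lam/c.K < 1 := (div_lt_one hK).2 hlamK
    linarith
  set xs : ℝ := Real.arccos t with hxs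
  have hxs_mem : xs ∈ Icc (0:ℝ) π := ⟨Real.arccos_nonneg t, Real.arccos_le_pi t⟩
  have hcosxs : Real.cos xs = t := Real.cos_arccos (by linarith) (by linarith)
  -- D is antitone on [0, xs]
  have hanti : AntitoneOn c.D (Icc 0 xs) := by
    apply anti_help (fun x hx => c.hDd x ⟨hx.1, le_trans hx.2 hxs_mem.2⟩)
    intro x hx
    have hxm : x ∈ Icc (0:ℝ) π := ⟨hx.1.le, by linarith [hx.2, hxs_mem.2]⟩
    have hcos : Real.cos xs < Real.cos x :=
      Real.strictAntiOn_cos hxm hxs_mem hx.2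
    rw [hcosxs] at hcos
    have hkey : c.K*(1 - Real.cos x) - c.lam ≤ 0 := by
      have : 1 - Real.cos x ≤ c.lam/c.K := by rw [ht] at hcos; linarith
      calc c.K*(1 - Real.cos x) - c.lam ≤ c.K*(c.lam/c.K) - c.lam := by nlinarith
        _ = 0 := by field_simp; ring
    exact mul_nonpos_of_nonpos_of_nonneg (by linarith) (c.hφpos x).le
  -- D is monotone on [xs, π]
  have hmono : MonotoneOn c.D (Icc xs π) := by
    apply mono_help (fun x hx => c.hDd x ⟨le_trans hxs_mem.1 hx.1, hx.2⟩)
    intro x hx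
    have hxm : x ∈ Icc (0:ℝ) π := ⟨le_trans hxs_mem.1 hx.1.le, hx.2.le⟩
    have hcos : Real.cos x < Real.cos xs :=
      Real.strictAntiOn_cos hxs_mem hxm hx.1
    rw [hcosxs] at hcos
    have hkey : 0 ≤ c.K*(1 - Real.cos x) - c.lam := by
      have : c.lam/c.K ≤ 1 - Real.cos x := by rw [ht] at hcos; linarith
      have h2 : c.K*(c.lam/c.K) ≤ c.K*(1 - Real.cos x) := by nlinarith
      have h3 : c.K*(c.lam/c.K) = c.lam := by field_simp
      linarith
    exact mul_nonneg (by linarith) (c.hφpos x).le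
  intro x hx
  rcases le_total x xs with h | h
  · have := hanti (left_mem_Icc.2 (by linarith [hxs_mem.1])) ⟨hx.1, h⟩ hx.1
    rw [c.hD0] at this; exact this
  · have := hmono ⟨h, hx.2⟩ (right_mem_Icc.2 (by linarith [hxs_mem.2])) hx.2
    rw [c.hDπ] at this; exact this

lemma φ_anti : AntitoneOn c.φ (Icc 0 π) := by
  apply anti_help (fun x _ => c.hφd x)
  intro x hx
  exact c.D_nonpos x (Ioo_subset_Icc_self hx)

lemma φ_le_one : ∀ x ∈ Icc (0:ℝ) π, c.φ x ≤ 1 := by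
  intro x hx
  have := c.φ_anti (left_mem_Icc.2 pi_pos.le) hx hx.1
  rw [c.hφ0] at this; exact this

noncomputable def r : ℝ := Real.sqrt c.s

lemma r_sq : c.r ^ 2 = c.s := Real.sq_sqrt (by linarith [c.s_ge])

lemma r_ge : (10:ℝ) ≤ c.r := by
  have h1 := c.r_sq
  have h2 : 0 ≤ c.r := Real.sqrt_nonneg _
  nlinarith [c.s_ge]

noncomputable def xL : ℝ := 8/(5*c.r)

lemma xL_pos : 0 < c.xL := by
  have := c.r_ge
  unfold xL
  positivity

lemma xL_le : c.xL ≤ 8/50 := by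
  have h := c.r_ge
  unfold xL
  rw [div_le_div_iff₀ (by linarith) (by norm_num)]
  linarith

lemma xL_lt_pi : c.xL < π := by
  have := c.xL_le
  have := pi_gt_three
  linarith

lemma xL_sq : c.xL^2 = 64/(25*c.s) := by
  have h1 := c.r_sq
  have h2 := c.r_ge
  have h3 : (0:ℝ) < c.r := by linarith
  have h4 : (0:ℝ) < c.s := by linarith [c.s_ge]
  unfold xL
  rw [div_pow]
  rw [div_eq_div_iff (by positivity) (by positivity)]
  nlinarith

lemma cl_sq : Real.sqrt (c.lam/2) ^ 2 = c.lam/2 :=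
  Real.sq_sqrt (by linarith [c.lam_pos])

lemma cos_lb : ∀ x ∈ Icc (0:ℝ) c.xL, (9:ℝ)/25 ≤ Real.cos (Real.sqrt (c.lam/2) * x) := by
  intro x hx
  have h1 : (Real.sqrt (c.lam/2) * x)^2 ≤ 32/25 := by
    have h2 := c.cl_sq
    have h3 := c.lam_le
    have h4 := c.lam_pos
    have h5 := c.xL_sq
    have h6 := c.s_ge
    have hx2 : x^2 ≤ c.xL^2 := by nlinarith [hx.1, hx.2]
    have : (Real.sqrt (c.lam/2) * x)^2 = c.lam/2 * x^2 := by
      rw [mul_pow, h2]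
    rw [this, h5] at *
    calc c.lam/2 * x^2 ≤ c.s/2 * (64/(25*c.s)) := by
          apply mul_le_mul (by linarith) (by linarith [hx2]) (by positivity) (by positivity)
      _ = 32/25 := by field_simp; ring
  have := Real.one_sub_sq_div_two_le_cos (x := Real.sqrt (c.lam/2) * x)
  linarith

lemma phi_ge_cos : ∀ x ∈ Icc (0:ℝ) c.xL, Real.cos (Real.sqrt (c.lam/2) * x) ≤ c.φ x := by
  have hlam := c.lam_pos
  have hcl2 := c.cl_sq
  set cl := Real.sqrt (c.lam/2) with hcl
  -- Wronskian is monotone, starts at 0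
  have hWd : ∀ x ∈ Icc (0:ℝ) c.xL, HasDerivAt
      (fun y => c.D y * Real.cos (cl*y) - c.φ y * (-(cl * Real.sin (cl*y))))
      ((c.K*(1 - Real.cos x) - c.lam)/2 * c.φ x * Real.cos (cl*x)
        - c.φ x * (-(cl^2 * Real.cos (cl*x)))) x := by
    intro x hx
    have hx' : x ∈ Icc (0:ℝ) π := ⟨hx.1, le_trans hx.2 c.xL_lt_pi.le⟩
    have h := ((c.hDd x hx').mul (cos_d1 cl x)).sub ((c.hφd x).mul (cos_d2 cl x))
    refine h.congr_deriv ?_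
    ring
  have hmono : MonotoneOn
      (fun y => c.D y * Real.cos (cl*y) - c.φ y * (-(cl * Real.sin (cl*y))))
      (Icc 0 c.xL) := by
    apply mono_help hWd
    intro x hx
    have hC : (0:ℝ) ≤ Real.cos (cl*x) := by
      have := c.cos_lb x (Ioo_subset_Icc_self hx)
      linarith
    have hφ := (c.hφpos x).le
    have hq : (0:ℝ) ≤ c.K*(1 - Real.cos x) := by
      have := Real.cos_le_one x
      have := c.K_pos
      nlinarith
    have heq : (c.K*(1 - Real.cos x) - c.lam)/2 * c.φ x * Real.cos (cl*x)
        - c.φ x * (-(cl^2 * Real.cos (cl*x)))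
        = ((c.K*(1 - Real.cos x) - c.lam)/2 + cl^2) * (c.φ x * Real.cos (cl*x)) := by ring
    rw [heq, hcl2]
    apply mul_nonneg (by linarith) (mul_nonneg hφ hC)
  have hW0 : ∀ x ∈ Icc (0:ℝ) c.xL,
      0 ≤ c.D x * Real.cos (cl*x) - c.φ x * (-(cl * Real.sin (cl*x))) := by
    intro x hx
    have := hmono (left_mem_Icc.2 c.xL_pos.le) hx hx.1
    simp only [c.hD0, mul_zero, Real.sin_zero, mul_zero, neg_zero, zero_mul] at this
    norm_num at this
    linarith [this]
  -- ratio φ / cos is monotone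
  have hRd : ∀ x ∈ Icc (0:ℝ) c.xL, HasDerivAt
      (fun y => c.φ y / Real.cos (cl*y))
      ((c.D x * Real.cos (cl*x) - c.φ x * (-(cl * Real.sin (cl*x)))) / (Real.cos (cl*x))^2) x := by
    intro x hx
    have hC : Real.cos (cl*x) ≠ 0 := by
      have := c.cos_lb x hx; linarith
    exact (c.hφd x).div (cos_d1 cl x) hC
  have hRmono : MonotoneOn (fun y => c.φ y / Real.cos (cl*y)) (Icc 0 c.xL) := by
    apply mono_help hRd
    intro x hx
    apply div_nonneg (hW0 x (Ioo_subset_Icc_self hx)) (sq_nonneg _)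
  intro x hx
  have := hRmono (left_mem_Icc.2 c.xL_pos.le) hx hx.1
  simp only [mul_zero, Real.cos_zero, c.hφ0] at this
  norm_num at this
  have hC : (0:ℝ) < Real.cos (cl*x) := by
    have := c.cos_lb x hx; linarith
  rw [le_div_iff₀ hC] at this
  linarith

lemma phi_ge_const : ∀ x ∈ Icc (0:ℝ) c.xL, (9:ℝ)/25 ≤ c.φ x := by
  intro x hx
  exact le_trans (c.cos_lb x hx) (c.phi_ge_cos x hx)

lemma phi_ge : ∀ x ∈ Icc (0:ℝ) π, (9:ℝ)/25 * Real.exp (-(c.s/2*x^2)) ≤ c.φ x := by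
  have hs100 := c.s_ge
  have hsq := c.s_sq
  have hlam := c.lam_pos
  set s := c.s with hs
  -- the Wronskian with the Gaussian exp(-(s/2)x²) is antitone on [xL, π], positive at π
  have hWd : ∀ x ∈ Icc c.xL π, HasDerivAt
      (fun y => c.D y * Real.exp (-(s/2*y^2)) - c.φ y * (-(2*(s/2)*y) * Real.exp (-(s/2*y^2))))
      ((c.K*(1 - Real.cos x) - c.lam)/2 * c.φ x * Real.exp (-(s/2*x^2))
        - c.φ x * ((4*(s/2)^2*x^2 - 2*(s/2)) * Real.exp (-(s/2*x^2)))) x := by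
    intro x hx
    have hx' : x ∈ Icc (0:ℝ) π := ⟨le_trans c.xL_pos.le hx.1, hx.2⟩
    have h := ((c.hDd x hx').mul (gauss_d1 (s/2) x)).sub ((c.hφd x).mul (gauss_d2 (s/2) x))
    refine h.congr_deriv ?_
    ring
  have hanti : AntitoneOn
      (fun y => c.D y * Real.exp (-(s/2*y^2)) - c.φ y * (-(2*(s/2)*y) * Real.exp (-(s/2*y^2))))
      (Icc c.xL π) := by
    apply anti_help hWd
    intro x hx
    have hφ := (c.hφpos x).le
    have hE : (0:ℝ) < Real.exp (-(s/2*x^2)) := Real.exp_pos _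
    have hcos := one_sub_cos_le x
    have hxL2 : c.xL^2 ≤ x^2 := by nlinarith [hx.1, hx.2, c.xL_pos]
    have hKx : 64/25*s ≤ c.K*x^2 := by
      have := c.xL_sq
      rw [this] at hxL2
      have hKs : c.K = s*s := by nlinarith
      rw [hKs]
      have h64 : 64/(25*s) * s = 64/25 := by field_simp
      nlinarith
    have hkey : (c.K*(1 - Real.cos x) - c.lam)/2 - (4*(s/2)^2*x^2 - 2*(s/2)) ≤ 0 := by
      have hq : (c.K*(1 - Real.cos x) - c.lam)/2 ≤ c.K*x^2/4 := by nlinarith [c.K_pos]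
      nlinarith
    have heq : (c.K*(1 - Real.cos x) - c.lam)/2 * c.φ x * Real.exp (-(s/2*x^2))
        - c.φ x * ((4*(s/2)^2*x^2 - 2*(s/2)) * Real.exp (-(s/2*x^2)))
        = ((c.K*(1 - Real.cos x) - c.lam)/2 - (4*(s/2)^2*x^2 - 2*(s/2)))
          * (c.φ x * Real.exp (-(s/2*x^2))) := by ring
    rw [heq]
    exact mul_nonpos_of_nonpos_of_nonneg hkey (mul_nonneg hφ hE.le)
  have hWpos : ∀ x ∈ Icc c.xL π, 0 < c.D x + s*x*c.φ x := by
    intro x hx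
    have h1 := hanti hx (right_mem_Icc.2 c.xL_lt_pi.le) hx.2
    simp only [c.hDπ] at h1
    have hEπ : (0:ℝ) < Real.exp (-(s/2*π^2)) := Real.exp_pos _
    have hEx : (0:ℝ) < Real.exp (-(s/2*x^2)) := Real.exp_pos _
    have hφπ := c.hφpos π
    have h2 : 0 < c.φ π * (2*(s/2)*π * Real.exp (-(s/2*π^2))) := by
      apply mul_pos hφπ (mul_pos (by nlinarith [pi_pos]) hEπ)
    have h3 : 0 < c.D x * Real.exp (-(s/2*x^2)) - c.φ x * (-(2*(s/2)*x) * Real.exp (-(s/2*x^2))) := by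
      nlinarith
    have h4 : (c.D x + s*x*c.φ x) * Real.exp (-(s/2*x^2))
        = c.D x * Real.exp (-(s/2*x^2)) - c.φ x * (-(2*(s/2)*x) * Real.exp (-(s/2*x^2))) := by ring
    nlinarith
  -- g = φ·exp((s/2)x²) is monotone on [xL, π]
  have hgd : ∀ x ∈ Icc c.xL π, HasDerivAt (fun y => c.φ y * Real.exp (s/2*y^2))
      ((c.D x + s*x*c.φ x) * Real.exp (s/2*x^2)) x := by
    intro x hx
    have h := (c.hφd x).mul (exp_sq_d1 (s/2) x)
    refine h.congr_deriv ?_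
    ring
  have hgmono : MonotoneOn (fun y => c.φ y * Real.exp (s/2*y^2)) (Icc c.xL π) := by
    apply mono_help hgd
    intro x hx
    have := hWpos x (Ioo_subset_Icc_self hx)
    have hE : (0:ℝ) < Real.exp (s/2*x^2) := Real.exp_pos _
    positivity
  intro x hx
  rcases le_total x c.xL with h | h
  · have h1 := c.phi_ge_const x ⟨hx.1, h⟩
    have hE : Real.exp (-(s/2*x^2)) ≤ 1 := by
      apply Real.exp_le_one_iff.2
      nlinarith [sq_nonneg x, hs100]
    nlinarith
  · have h1 := hgmono (left_mem_Icc.2 (le_trans h hx.2)) ⟨h, hx.2⟩ h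
    have h2 := c.phi_ge_const c.xL (right_mem_Icc.2 c.xL_pos.le)
    have hE1 : (1:ℝ) ≤ Real.exp (s/2*c.xL^2) := by
      apply Real.one_le_exp_iff.2
      have := c.xL_pos
      nlinarith [hs100]
    have h3 : (9:ℝ)/25 ≤ c.φ c.xL * Real.exp (s/2*c.xL^2) := by nlinarith [c.hφpos c.xL]
    have h4 : (9:ℝ)/25 ≤ c.φ x * Real.exp (s/2*x^2) := by linarith
    have hE : (0:ℝ) < Real.exp (s/2*x^2) := Real.exp_pos _
    have hEE : Real.exp (-(s/2*x^2)) * Real.exp (s/2*x^2) = 1 := by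
      rw [← Real.exp_add]; norm_num
    calc (9:ℝ)/25 * Real.exp (-(s/2*x^2))
        ≤ (c.φ x * Real.exp (s/2*x^2)) * Real.exp (-(s/2*x^2)) := by
          apply mul_le_mul_of_nonneg_right h4 (Real.exp_pos _).le
      _ = c.φ x := by
          rw [mul_assoc, mul_comm (Real.exp (s/2*x^2)), hEE, mul_one]

lemma phi_pi : c.φ π ≤ 2 * Real.exp (-(c.s*π/4)) := by
  have hs100 := c.s_ge
  have hsq := c.s_sq
  have hlam := c.lam_le
  set s := c.s with hs
  set m : ℝ := s/2 with hm
  have hπ2 : (0:ℝ) < π/2 := by linarith [pi_pos]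
  have hWd : ∀ x ∈ Icc (π/2) π, HasDerivAt
      (fun y => c.D y * Real.cosh (m*(π - y)) - c.φ y * (-(m * Real.sinh (m*(π - y)))))
      ((c.K*(1 - Real.cos x) - c.lam)/2 * c.φ x * Real.cosh (m*(π - x))
        - c.φ x * (m^2 * Real.cosh (m*(π - x)))) x := by
    intro x hx
    have hx' : x ∈ Icc (0:ℝ) π := ⟨by linarith [hx.1], hx.2⟩
    have h := ((c.hDd x hx').mul (cosh_d1 m x)).sub ((c.hφd x).mul (cosh_d2 m x))
    refine h.congr_deriv ?_
    ring
  have hmono : MonotoneOn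
      (fun y => c.D y * Real.cosh (m*(π - y)) - c.φ y * (-(m * Real.sinh (m*(π - y)))))
      (Icc (π/2) π) := by
    apply mono_help hWd
    intro x hx
    have hch : (0:ℝ) < Real.cosh (m*(π - x)) := (Real.cosh_pos _)
    have hφ := (c.hφpos x).le
    have hcos : Real.cos x ≤ 0 :=
      Real.cos_nonpos_of_pi_div_two_le_of_le hx.1.le (by linarith [hx.2, pi_pos])
    have hkey : 0 ≤ (c.K*(1 - Real.cos x) - c.lam)/2 - m^2 := by
      have : c.K ≤ c.K*(1 - Real.cos x) := by nlinarith [c.K_pos]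
      have hm2 : m^2 = c.K/4 := by rw [hm]; nlinarith
      nlinarith
    have heq : (c.K*(1 - Real.cos x) - c.lam)/2 * c.φ x * Real.cosh (m*(π - x))
        - c.φ x * (m^2 * Real.cosh (m*(π - x)))
        = ((c.K*(1 - Real.cos x) - c.lam)/2 - m^2) * (c.φ x * Real.cosh (m*(π - x))) := by ring
    rw [heq]
    positivity
  -- ratio φ/cosh is antitone on [π/2, π]
  have hRd : ∀ x ∈ Icc (π/2) π, HasDerivAt
      (fun y => c.φ y / Real.cosh (m*(π - y)))
      ((c.D x * Real.cosh (m*(π - x)) - c.φ x * (-(m * Real.sinh (m*(π - x)))))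
        / (Real.cosh (m*(π - x)))^2) x := by
    intro x hx
    exact (c.hφd x).div (cosh_d1 m x) (ne_of_gt (Real.cosh_pos _))
  have hWπ : (fun y => c.D y * Real.cosh (m*(π - y)) - c.φ y * (-(m * Real.sinh (m*(π - y))))) π
      = 0 := by
    simp [c.hDπ]
  have hRanti : AntitoneOn (fun y => c.φ y / Real.cosh (m*(π - y))) (Icc (π/2) π) := by
    apply anti_help hRd
    intro x hx
    apply div_nonpos_of_nonpos_of_nonneg _ (sq_nonneg _)
    have h1 := hmono (Ioo_subset_Icc_self hx) (right_mem_Icc.2 (by linarith [pi_pos])) hx.2.le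
    rw [hWπ] at h1
    exact h1
  have hkey := hRanti (left_mem_Icc.2 (by linarith [pi_pos])) (right_mem_Icc.2 (by linarith [pi_pos]))
      (by linarith [pi_pos])
  simp only [sub_self, mul_zero, Real.cosh_zero, div_one] at hkey
  -- φ(π) ≤ φ(π/2)/cosh(sπ/4) ≤ 1/cosh(sπ/4) ≤ 2 exp(-sπ/4)
  have hφh : c.φ (π/2) ≤ 1 := c.φ_le_one (π/2) ⟨hπ2.le, by linarith [pi_pos]⟩
  have harg : m*(π - π/2) = s*π/4 := by rw [hm]; ring
  rw [harg] at hkey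
  have hch : (0:ℝ) < Real.cosh (s*π/4) := (Real.cosh_pos _)
  have h2 : c.φ (π/2) / Real.cosh (s*π/4) ≤ 1 / Real.cosh (s*π/4) := by
    gcongr
  have hch2 : Real.exp (s*π/4)/2 ≤ Real.cosh (s*π/4) := by
    rw [Real.cosh_eq]
    have := (Real.exp_pos (-(s*π/4))).le
    linarith
  have hexp : (0:ℝ) < Real.exp (s*π/4)/2 := by positivity
  have h3 : 1 / Real.cosh (s*π/4) ≤ 1 / (Real.exp (s*π/4)/2) :=
    one_div_le_one_div_of_le hexp hch2
  have h4 : 1 / (Real.exp (s*π/4)/2) = 2 * Real.exp (-(s*π/4)) := by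
    rw [Real.exp_neg]
    field_simp
  linarith

noncomputable def t0 : ℝ := π / c.r

lemma t0_pos : 0 < c.t0 := by
  have := c.r_ge
  unfold t0
  positivity

lemma t0_le : c.t0 ≤ π/10 := by
  have h := c.r_ge
  unfold t0
  rw [div_le_div_iff₀ (by linarith) (by norm_num)]
  nlinarith [pi_pos]

lemma t0_sq : c.t0^2 * c.s = π^2 := by
  have h1 := c.r_sq
  have h2 := c.r_ge
  unfold t0
  rw [div_pow]
  rw [div_mul_eq_mul_div, ← h1]
  field_simp

set_option maxHeartbeats 2000000 in
lemma phi_le : ∀ x ∈ Icc (0:ℝ) π, c.φ x ≤ Real.exp (π/4) * Real.exp (-(c.s/(4*π)*x^2)) := by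
  have hs100 := c.s_ge
  have hsq := c.s_sq
  have hlamle := c.lam_le
  have hlam := c.lam_pos
  have hπ := pi_pos
  set s := c.s with hs
  set α : ℝ := s/(4*π) with hα
  have hαpos : 0 < α := by rw [hα]; positivity
  -- exponent bookkeeping
  have hαt0 : α * c.t0^2 = π/4 := by
    have := c.t0_sq
    rw [hα]
    field_simp
    nlinarith
  have hαπ : α * π^2 = s*π/4 := by rw [hα]; field_simp
  -- Wronskian monotone on [t0, π]
  have hWd : ∀ x ∈ Icc c.t0 π, HasDerivAt
      (fun y => c.D y * Real.exp (-(α*y^2)) - c.φ y * (-(2*α*y) * Real.exp (-(α*y^2))))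
      ((c.K*(1 - Real.cos x) - c.lam)/2 * c.φ x * Real.exp (-(α*x^2))
        - c.φ x * ((4*α^2*x^2 - 2*α) * Real.exp (-(α*x^2)))) x := by
    intro x hx
    have hx' : x ∈ Icc (0:ℝ) π := ⟨le_trans c.t0_pos.le hx.1, hx.2⟩
    have h := ((c.hDd x hx').mul (gauss_d1 α x)).sub ((c.hφd x).mul (gauss_d2 α x))
    refine h.congr_deriv ?_
    ring
  have hWmono : MonotoneOn
      (fun y => c.D y * Real.exp (-(α*y^2)) - c.φ y * (-(2*α*y) * Real.exp (-(α*y^2))))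
      (Icc c.t0 π) := by
    apply mono_help hWd
    intro x hx
    have hφ := (c.hφpos x).le
    have hE : (0:ℝ) < Real.exp (-(α*x^2)) := Real.exp_pos _
    have hx0 : 0 < x := lt_of_lt_of_le c.t0_pos hx.1.le
    have hcos2 : 2/π^2*x^2 ≤ 1 - Real.cos x := by
      have := Real.cos_le_one_sub_mul_cos_sq (x := x) (by
        rw [abs_of_nonneg hx0.le]; exact hx.2.le)
      linarith
    have hX : c.t0^2 ≤ x^2 := by nlinarith [hx.1, c.t0_pos]
    have ht0s := c.t0_sq
    have hπ2 : (0:ℝ) < π^2 := by positivity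
    have hkey2 : s ≤ s^2/π^2 * x^2 := by
      have h5 : s^2/π^2 * c.t0^2 = s := by
        field_simp
        nlinarith
      have h6 : s^2/π^2 * c.t0^2 ≤ s^2/π^2 * x^2 := by
        apply mul_le_mul_of_nonneg_left hX (by positivity)
      linarith
    have h1 : c.K*(2/π^2*x^2) ≤ c.K*(1 - Real.cos x) :=
      mul_le_mul_of_nonneg_left hcos2 c.K_pos.le
    have h4α : 4*α^2*x^2 = s^2/π^2*x^2/4 := by rw [hα]; field_simp
    have hkey : 0 ≤ (c.K*(1 - Real.cos x) - c.lam)/2 - (4*α^2*x^2 - 2*α) := by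
      have hKx : c.K*(2/π^2*x^2) = 2*(s^2/π^2*x^2) := by rw [← hsq]; ring
      nlinarith [hαpos]
    have heq : (c.K*(1 - Real.cos x) - c.lam)/2 * c.φ x * Real.exp (-(α*x^2))
        - c.φ x * ((4*α^2*x^2 - 2*α) * Real.exp (-(α*x^2)))
        = ((c.K*(1 - Real.cos x) - c.lam)/2 - (4*α^2*x^2 - 2*α))
          * (c.φ x * Real.exp (-(α*x^2))) := by ring
    rw [heq]
    positivity
  -- derivative of g = φ·exp(αx²)
  have hgd : ∀ x : ℝ, HasDerivAt (fun y => c.φ y * Real.exp (α*y^2))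
      ((c.D x + 2*α*x*c.φ x) * Real.exp (α*x^2)) x := by
    intro x
    have h := (c.hφd x).mul (exp_sq_d1 α x)
    refine h.congr_deriv ?_
    ring
  -- sign transfer between the Wronskian and D + 2αxφ
  have hsign : ∀ x : ℝ, c.D x * Real.exp (-(α*x^2)) - c.φ x * (-(2*α*x) * Real.exp (-(α*x^2)))
      = (c.D x + 2*α*x*c.φ x) * Real.exp (-(α*x^2)) := by
    intro x; ring
  have hg_bound : ∀ x ∈ Icc c.t0 π, c.φ x * Real.exp (α*x^2) ≤ Real.exp (π/4) := by
    intro x hx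
    by_cases hWx : c.D x * Real.exp (-(α*x^2)) - c.φ x * (-(2*α*x) * Real.exp (-(α*x^2))) ≤ 0
    · -- g is antitone on [t0, x]
      have hganti : AntitoneOn (fun y => c.φ y * Real.exp (α*y^2)) (Icc c.t0 x) := by
        apply anti_help (fun y _ => hgd y)
        intro y hy
        have hym : y ∈ Icc c.t0 π := ⟨hy.1.le, le_trans hy.2.le hx.2⟩
        have hWy := hWmono hym hx hy.2.le
        have hWy0 : c.D y * Real.exp (-(α*y^2)) - c.φ y * (-(2*α*y) * Real.exp (-(α*y^2))) ≤ 0 :=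
          le_trans hWy hWx
        rw [hsign y] at hWy0
        have hEy : (0:ℝ) < Real.exp (-(α*y^2)) := Real.exp_pos _
        have h7 : c.D y + 2*α*y*c.φ y ≤ 0 := by nlinarith [hWy0, hEy]
        exact mul_nonpos_of_nonpos_of_nonneg h7 (Real.exp_pos _).le
      have ht0m : c.t0 ∈ Icc c.t0 x := left_mem_Icc.2 hx.1
      have hxm : x ∈ Icc c.t0 x := right_mem_Icc.2 hx.1
      have h8 := hganti ht0m hxm hx.1
      have hφt0 : c.φ c.t0 ≤ 1 := c.φ_le_one c.t0 ⟨c.t0_pos.le, by linarith [c.t0_le, pi_pos]⟩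
      have h9 : c.φ c.t0 * Real.exp (α*c.t0^2) ≤ Real.exp (π/4) := by
        rw [hαt0]
        nlinarith [Real.exp_pos (π/4)]
      exact le_trans h8 h9
    · push_neg at hWx
      have hgmono : MonotoneOn (fun y => c.φ y * Real.exp (α*y^2)) (Icc x π) := by
        apply mono_help (fun y _ => hgd y)
        intro y hy
        have hym : y ∈ Icc c.t0 π := ⟨le_trans hx.1 hy.1.le, hy.2.le⟩
        have hWy := hWmono hx hym hy.1.le
        have hWy0 : 0 < c.D y * Real.exp (-(α*y^2)) - c.φ y * (-(2*α*y) * Real.exp (-(α*y^2))) :=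
          lt_of_lt_of_le hWx hWy
        rw [hsign y] at hWy0
        have hEy : (0:ℝ) < Real.exp (-(α*y^2)) := Real.exp_pos _
        have h7 : 0 ≤ c.D y + 2*α*y*c.φ y := by nlinarith [hWy0, hEy]
        positivity
      have h8 := hgmono (left_mem_Icc.2 hx.2) (right_mem_Icc.2 hx.2) hx.2
      have h9 : c.φ π * Real.exp (α*π^2) ≤ 2 := by
        have h10 := c.phi_pi
        rw [hαπ]
        have hEπ : (0:ℝ) < Real.exp (s*π/4) := Real.exp_pos _
        have h11 : Real.exp (-(s*π/4)) * Real.exp (s*π/4) = 1 := by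
          rw [← Real.exp_add]; norm_num
        nlinarith [h10, hEπ]
      have h12 : (2:ℝ) ≤ Real.exp (π/4) := by
        have hlog := Real.log_two_lt_d9
        have hπ4 : Real.log 2 < π/4 := by
          have := Real.pi_gt_d6
          linarith
        calc (2:ℝ) = Real.exp (Real.log 2) := (Real.exp_log two_pos).symm
          _ ≤ Real.exp (π/4) := Real.exp_le_exp.2 hπ4.le
      exact le_trans h8 (by linarith)
  intro x hx
  rcases le_total x c.t0 with h | h
  · have h1 := c.φ_le_one x hx
    have h2 : α*x^2 ≤ π/4 := by
      rw [← hαt0]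
      apply mul_le_mul_of_nonneg_left _ hαpos.le
      nlinarith [hx.1]
    have h3 : (1:ℝ) ≤ Real.exp (π/4) * Real.exp (-(α*x^2)) := by
      rw [← Real.exp_add]
      apply Real.one_le_exp_iff.2
      linarith
    linarith
  · have h4 := hg_bound x ⟨h, hx.2⟩
    have hE : (0:ℝ) < Real.exp (α*x^2) := Real.exp_pos _
    have h11 : Real.exp (-(α*x^2)) * Real.exp (α*x^2) = 1 := by
      rw [← Real.exp_add]; norm_num
    nlinarith [h4, Real.exp_pos (-(α*x^2)), Real.exp_pos (π/4)]

lemma u_bounds {u : ℝ → ℝ} (hφu : ∀ x, c.φ x = Real.exp (-(u x)/2)) :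
    ∀ x ∈ Icc (0:ℝ) π, c.s/(2*π)*x^2 - 4 ≤ u x ∧ u x ≤ c.s*x^2 + 4 := by
  intro x hx
  have hπ := pi_pos
  have hπ315 := Real.pi_lt_d2
  constructor
  · have h1 := c.phi_le x hx
    rw [hφu x, ← Real.exp_add] at h1
    have h2 := Real.exp_le_exp.1 h1
    have hhalf : c.s/(2*π)*x^2 = 2*(c.s/(4*π)*x^2) := by
      field_simp
      ring
    linarith
  · have h1 := c.phi_ge x hx
    rw [hφu x] at h1
    have h925 : (0:ℝ) < (9:ℝ)/25 * Real.exp (-(c.s/2*x^2)) := by positivity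
    have h2 := Real.log_le_log h925 h1
    rw [Real.log_exp, Real.log_mul (by norm_num) (Real.exp_ne_zero _), Real.log_exp] at h2
    have h3 : Real.log (25/9) ≤ 16/9 := by
      have := Real.log_le_sub_one_of_pos (show (0:ℝ) < 25/9 by norm_num)
      linarith
    have h4 : Real.log ((9:ℝ)/25) = - Real.log (25/9) := by
      rw [← Real.log_inv]
      norm_num
    have hs2 : c.s/2*x^2*2 = c.s*x^2 := by ring
    linarith

end PhiCtx

lemma solves_master {κ a : ℝ} {u : ℝ → ℝ} {lam : ℝ} (hsol : SolvesE κ a u lam)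
    (hK : (10000:ℝ) ≤ κ*(1-a)) :
    ∀ x ∈ Icc (0:ℝ) π,
      Real.sqrt (κ*(1-a))/(2*π)*x^2 - 4 ≤ u x ∧ u x ≤ Real.sqrt (κ*(1-a))*x^2 + 4 := by
  obtain ⟨hu2, heven, hu0, hπd, hπd', hode⟩ := hsol
  -- regularity
  have hreg : Differentiable ℝ u ∧ Differentiable ℝ (deriv u) ∧ Continuous (deriv (deriv u)) := by
    have h2 : ContDiff ℝ (1 + 1 : ℕ) u := by exact_mod_cast hu2
    rw [show ((1+1 : ℕ) : WithTop ℕ∞) = (1 : WithTop ℕ∞) + 1 by norm_cast] at h2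
    rw [contDiff_succ_iff_deriv] at h2
    obtain ⟨hd, -, h1⟩ := h2
    rw [contDiff_one_iff_deriv] at h1
    exact ⟨hd, h1.1, h1.2⟩
  obtain ⟨hdu, hddu, -⟩ := hreg
  have hd0 : deriv u 0 = 0 := by
    have h : (fun x : ℝ => u (-x)) = u := funext heven
    have h2 := deriv_comp_neg (f := u) (x := (0:ℝ))
    rw [h] at h2
    simp at h2
    linarith
  -- the Hopf-Cole transform
  have hφd : ∀ x : ℝ, HasDerivAt (fun y => Real.exp (-(u y)/2))
      (-(deriv u x)/2 * Real.exp (-(u x)/2)) x := by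
    intro x
    have h1 : HasDerivAt u (deriv u x) x := (hdu x).hasDerivAt
    have h2 : HasDerivAt (fun y => -(u y)/2) (-(deriv u x)/2) x := h1.neg.div_const 2
    have h3 := h2.exp
    convert h3 using 1
    ring
  have hDd : ∀ x ∈ Icc (0:ℝ) π, HasDerivAt (fun y => -(deriv u y)/2 * Real.exp (-(u y)/2))
      ((κ*(1-a)*(1 - Real.cos x) - lam)/2 * Real.exp (-(u x)/2)) x := by
    intro x hx
    have hx' : x ∈ Icc (-π) π := ⟨by linarith [hx.1, pi_pos], hx.2⟩
    have he := hode x hx'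
    simp only [Vfun] at he
    have h3 : HasDerivAt (fun y => -(deriv u y)/2) (-(deriv (deriv u) x)/2) x :=
      ((hddu x).hasDerivAt).neg.div_const 2
    have h4 := h3.mul (hφd x)
    refine h4.congr_deriv ?_
    linear_combination ((Real.exp (-(u x)/2))/2) * he
  set c : PhiCtx :=
    { K := κ*(1-a), lam := lam,
      φ := fun y => Real.exp (-(u y)/2),
      D := fun y => -(deriv u y)/2 * Real.exp (-(u y)/2),
      hK := hK,
      hφd := hφd,
      hDd := hDd,
      hφpos := fun y => Real.exp_pos _,
      hφ0 := by simp [hu0],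
      hD0 := by simp [hd0],
      hDπ := by simp [hπd] } with hc
  have := c.u_bounds (u := u) (fun x => rfl)
  simpa [hc, PhiCtx.s] using this

end AuxProofs

/-- Quadratic growth bounds for `u_a`: `c₁ κ^(1/2) x² - c₃ ≤ u(x) ≤ c₂ κ^(1/2) x² + c₃`
on `[-π, π]`, with `c₂, c₃` independent of `δ` and `κ`, and `c₁ = c₁(δ)`. -/
theorem quadratic_growth_bounds :
    ∃ c₂ : ℝ, 0 < c₂ ∧ ∃ c₃ : ℝ, 0 < c₃ ∧
      ∀ δ ∈ Set.Ioo (0 : ℝ) 1, ∃ κt : ℝ, 1 ≤ κt ∧ ∃ c₁ : ℝ, 0 < c₁ ∧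
        ∀ κ : ℝ, κt ≤ κ → ∀ a ∈ Set.Icc (0 : ℝ) (1 - δ),
          ∀ (u : ℝ → ℝ) (lam : ℝ), SolvesE κ a u lam →
            ∀ x ∈ Set.Icc (-π) π,
              c₁ * κ ^ ((1 : ℝ) / 2) * x ^ 2 - c₃ ≤ u x ∧
              u x ≤ c₂ * κ ^ ((1 : ℝ) / 2) * x ^ 2 + c₃ := by
  refine ⟨1, one_pos, 4, by norm_num, ?_⟩
  intro δ hδ
  obtain ⟨hδ0, hδ1⟩ := hδ
  have hπ := pi_pos
  refine ⟨10000/δ, ?_, Real.sqrt δ/(2*π), by positivity, ?_⟩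
  · rw [le_div_iff₀ hδ0]; linarith
  intro κ hκ a ha u lam hsol x hx
  have hκ0 : (0:ℝ) < κ := by
    have : (10000:ℝ)/δ > 0 := by positivity
    linarith
  have h1a : δ ≤ 1 - a := by linarith [ha.2]
  have h1a' : 1 - a ≤ 1 := by linarith [ha.1]
  have hK : (10000:ℝ) ≤ κ*(1-a) := by
    have h2 : 10000/δ*δ ≤ κ*(1-a) := by
      apply mul_le_mul hκ h1a hδ0.le hκ0.le
    rw [div_mul_cancel₀] at h2
    · exact h2
    · exact ne_of_gt hδ0
  have hmaster := solves_master hsol hK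
  have hrpow : κ ^ ((1 : ℝ) / 2) = Real.sqrt κ := (Real.sqrt_eq_rpow κ).symm
  -- comparison of coefficients
  have hs1 : Real.sqrt δ/(2*π) * Real.sqrt κ ≤ Real.sqrt (κ*(1-a))/(2*π) := by
    have h3 : Real.sqrt δ * Real.sqrt κ = Real.sqrt (δ*κ) := (Real.sqrt_mul hδ0.le κ).symm
    have h4 : Real.sqrt (δ*κ) ≤ Real.sqrt (κ*(1-a)) := by
      apply Real.sqrt_le_sqrt
      nlinarith
    calc Real.sqrt δ/(2*π) * Real.sqrt κ = Real.sqrt δ * Real.sqrt κ/(2*π) := by ring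
      _ = Real.sqrt (δ*κ)/(2*π) := by rw [h3]
      _ ≤ Real.sqrt (κ*(1-a))/(2*π) := by gcongr
  have hs2 : Real.sqrt (κ*(1-a)) ≤ Real.sqrt κ := by
    apply Real.sqrt_le_sqrt
    nlinarith
  have hx2 : (0:ℝ) ≤ x^2 := sq_nonneg x
  rcases le_total 0 x with hx0 | hx0
  · obtain ⟨hl, hr⟩ := hmaster x ⟨hx0, hx.2⟩
    constructor
    · rw [hrpow]
      nlinarith [hs1]
    · rw [hrpow]
      nlinarith [hs2]
  · have hmx : -x ∈ Set.Icc (0:ℝ) π := ⟨by linarith, by linarith [hx.1]⟩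
    obtain ⟨hl, hr⟩ := hmaster (-x) hmx
    have hux : u (-x) = u x := hsol.2.1 x
    rw [hux, neg_sq] at hl hr
    constructor
    · rw [hrpow]
      nlinarith [hs1]
    · rw [hrpow]
      nlinarith [hs2]
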